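/- Let n ≥ 3 and set s' = ⌊(2n+4)/3⌋ and F(s,n) = (s−2)(s−1)/2 + (n−s+2)(n−s+1)/2. Then every downhill weighing a : {1,…,n} → ℤ (a(1) > … > a(n)) with Σ_{i=1}^n i·a(i) ∈ {0, −1} uses at least F(s',n) coins: Σ_{i=1}^n |a(i)| ≥ F(s',n). Explicitly, Σ_{i=1}^n |a(i)| ≥ (5n²−3n)/18 when n ≡ 0 (mod 3), Σ_{i=1}^n |a(i)| ≥ (5n²−n−4)/18 when n ≡ 1 (mod 3), and Σ_{i=1}^n |a(i)| ≥ (5n²−5n+8)/18 when n ≡ 2 (mod 3). -/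

import Mathlib

private lemma sumId (p : ℕ) : 2 * ∑ i ∈ Finset.Icc 1 p, (i : ℤ) = p * (p + 1) := by
  induction p with
  | zero => simp
  | succ p ih =>
    rw [Finset.sum_Icc_succ_top (by omega)]
    push_cast
    push_cast at ih
    linear_combination ih

private lemma sumConst (p : ℕ) (c : ℤ) : ∑ _i ∈ Finset.Icc 1 p, c = p * c := by
  rw [Finset.sum_const, Nat.card_Icc]
  simp [nsmul_eq_mul]

private lemma sumE (p : ℕ) :
    6 * ∑ i ∈ Finset.Icc 1 p, ((p : ℤ) + 1 - 2 * i) * (i : ℤ) =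
      -(((p : ℤ) - 1) * p * (p + 1)) := by
  induction p with
  | zero => simp
  | succ p ih =>
    rw [Finset.sum_Icc_succ_top (by omega)]
    push_cast
    have hsp : ∀ i ∈ Finset.Icc 1 p, ((p : ℤ) + 1 + 1 - 2 * i) * (i : ℤ) =
        ((p : ℤ) + 1 - 2 * i) * (i : ℤ) + (i : ℤ) := by
      intro i _; ring
    rw [Finset.sum_congr rfl hsp, Finset.sum_add_distrib]
    push_cast at ih
    linear_combination ih + 3 * sumId p

private lemma sumA2 (p : ℕ) : ∀ n, p ≤ n →
    2 * ∑ i ∈ Finset.Icc (p + 1) n, ((i : ℤ) - p - 1) =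
      ((n : ℤ) - p - 1) * ((n : ℤ) - p) := by
  intro n hn
  induction n, hn using Nat.le_induction with
  | base => rw [Finset.Icc_eq_empty (by omega)]; push_cast; ring
  | succ n hn ih =>
    rw [Finset.sum_Icc_succ_top (by omega)]
    push_cast
    push_cast at ih
    linear_combination ih

private lemma sumA3 (p : ℕ) : ∀ n, p ≤ n →
    6 * ∑ i ∈ Finset.Icc (p + 1) n, (i : ℤ) * ((i : ℤ) - p - 1) =
      3 * ((p : ℤ) + 1) * ((n : ℤ) - p - 1) * ((n : ℤ) - p) +
        ((n : ℤ) - p - 1) * ((n : ℤ) - p) * (2 * ((n : ℤ) - p - 1) + 1) := by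
  intro n hn
  induction n, hn using Nat.le_induction with
  | base => rw [Finset.Icc_eq_empty (by omega)]; push_cast; ring
  | succ n hn ih =>
    rw [Finset.sum_Icc_succ_top (by omega)]
    push_cast
    push_cast at ih
    linear_combination ih

private lemma abelIneq : ∀ (p : ℕ) (a : ℕ → ℤ),
    (∀ i j, 1 ≤ i → i ≤ j → j ≤ p → a j ≤ a i) →
    0 ≤ ∑ i ∈ Finset.Icc 1 p, ((p : ℤ) + 1 - 2 * i) * a i := by
  intro p
  induction p with
  | zero => intro a _; simp
  | succ p ih =>
    intro a h
    have hA := ih a (fun i j hi hij hj => h i j hi hij (Nat.le_succ_of_le hj))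
    have hB : ∀ i ∈ Finset.Icc 1 p, a (p + 1) ≤ a i := by
      intro i hi
      rw [Finset.mem_Icc] at hi
      exact h i (p + 1) hi.1 (Nat.le_succ_of_le hi.2) le_rfl
    have hsum : (p : ℤ) * a (p + 1) ≤ ∑ i ∈ Finset.Icc 1 p, a i := by
      calc (p : ℤ) * a (p + 1) = ∑ _i ∈ Finset.Icc 1 p, a (p + 1) := (sumConst p _).symm
        _ ≤ ∑ i ∈ Finset.Icc 1 p, a i := Finset.sum_le_sum hB
    have heq : ∑ i ∈ Finset.Icc 1 (p + 1), (((p + 1 : ℕ) : ℤ) + 1 - 2 * i) * a i =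
        (∑ i ∈ Finset.Icc 1 p, ((p : ℤ) + 1 - 2 * i) * a i) +
          ((∑ i ∈ Finset.Icc 1 p, a i) - (p : ℤ) * a (p + 1)) := by
      rw [Finset.sum_Icc_succ_top (by omega)]
      have hsp : ∀ i ∈ Finset.Icc 1 p, (((p + 1 : ℕ) : ℤ) + 1 - 2 * i) * a i =
          ((p : ℤ) + 1 - 2 * i) * a i + a i := by
        intro i _; push_cast; ring
      rw [Finset.sum_congr rfl hsp, Finset.sum_add_distrib]
      push_cast
      ring
    rw [heq]
    linarith

theorem coin_lower_bound_at_s' (n : ℕ) (hn : 3 ≤ n) (a : ℕ → ℤ)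
    (hdown : ∀ i j : ℕ, 1 ≤ i → i < j → j ≤ n → a j < a i)
    (hS : ∑ i ∈ Finset.Icc 1 n, (i : ℤ) * a i = 0 ∨
      ∑ i ∈ Finset.Icc 1 n, (i : ℤ) * a i = -1) :
    ((((2 * n + 4) / 3 : ℕ) : ℤ) - 2) * ((((2 * n + 4) / 3 : ℕ) : ℤ) - 1) +
        ((n : ℤ) - (((2 * n + 4) / 3 : ℕ) : ℤ) + 2) *
          ((n : ℤ) - (((2 * n + 4) / 3 : ℕ) : ℤ) + 1) ≤
      2 * ∑ i ∈ Finset.Icc 1 n, |a i| ∧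
    (n % 3 = 0 →
      5 * (n : ℤ) ^ 2 - 3 * (n : ℤ) ≤ 18 * ∑ i ∈ Finset.Icc 1 n, |a i|) ∧
    (n % 3 = 1 →
      5 * (n : ℤ) ^ 2 - (n : ℤ) - 4 ≤ 18 * ∑ i ∈ Finset.Icc 1 n, |a i|) ∧
    (n % 3 = 2 →
      5 * (n : ℤ) ^ 2 - 5 * (n : ℤ) + 8 ≤ 18 * ∑ i ∈ Finset.Icc 1 n, |a i|) := by
  classical
  set z : ℕ := (2 * n + 4) / 3 with hzdef
  have hn' : (3 : ℤ) ≤ (n : ℤ) := by exact_mod_cast hn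
  -- quantitative monotonicity
  have hq : ∀ i j : ℕ, 1 ≤ i → i ≤ j → j ≤ n → a j + ((j : ℤ) - (i : ℤ)) ≤ a i := by
    intro i j hi hij
    induction j, hij using Nat.le_induction with
    | base => intro _; simp
    | succ j hj ih =>
      intro hjn
      have h1 : a (j + 1) < a j := hdown j (j + 1) (le_trans hi hj) (Nat.lt_succ_self j) hjn
      have h2 := ih (by omega)
      push_cast
      push_cast at h2
      linarith
  have hS0 : ∑ i ∈ Finset.Icc 1 n, (i : ℤ) * a i ≤ 0 := by
    rcases hS with h | h <;> rw [h] <;> norm_num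
  have hS1 : (-1 : ℤ) ≤ ∑ i ∈ Finset.Icc 1 n, (i : ℤ) * a i := by
    rcases hS with h | h <;> rw [h] <;> norm_num
  -- a 1 ≥ 1
  have ha1 : 1 ≤ a 1 := by
    by_contra hcon
    push_neg at hcon
    have hb : ∀ i ∈ Finset.Icc 1 n, (i : ℤ) * a i ≤ -((i : ℤ) * ((i : ℤ) - ((0 : ℕ) : ℤ) - 1)) := by
      intro i hi
      rw [Finset.mem_Icc] at hi
      have h1 := hq 1 i le_rfl hi.1 hi.2
      have hai : a i ≤ 1 - (i : ℤ) := by push_cast at h1; linarith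
      have hipos : (0 : ℤ) ≤ (i : ℤ) := by positivity
      push_cast
      nlinarith
    have hsum := Finset.sum_le_sum hb
    rw [Finset.sum_neg_distrib] at hsum
    have h3 := sumA3 0 n (Nat.zero_le n)
    rw [show (0 : ℕ) + 1 = 1 from rfl] at h3
    push_cast at h3 hsum
    have hn3 : (0 : ℤ) ≤ (n : ℤ) - 3 := by linarith
    nlinarith [hsum, h3, hS1, mul_nonneg hn3 hn3, mul_nonneg (mul_nonneg hn3 hn3) hn3]
  -- a n ≤ 0
  have han : a n ≤ 0 := by
    by_contra hcon
    push_neg at hcon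
    have hb : ∀ i ∈ Finset.Icc 1 n, (1 : ℤ) ≤ (i : ℤ) * a i := by
      intro i hi
      rw [Finset.mem_Icc] at hi
      have h1 := hq i n hi.1 hi.2 le_rfl
      have hin : (i : ℤ) ≤ (n : ℤ) := by exact_mod_cast hi.2
      have h2 : (1 : ℤ) ≤ a i := by linarith
      have h3 : (1 : ℤ) ≤ (i : ℤ) := by exact_mod_cast hi.1
      nlinarith
    have hsum := Finset.sum_le_sum hb
    rw [sumConst n 1] at hsum
    have : (n : ℤ) ≤ ∑ i ∈ Finset.Icc 1 n, (i : ℤ) * a i := by linarith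
    linarith
  -- crossing index p
  have hn1 : 1 ≤ n - 1 := by omega
  set p := Nat.findGreatest (fun k => 1 ≤ a k) (n - 1) with hpdef
  have hp1 : 1 ≤ p := Nat.le_findGreatest (P := fun k => 1 ≤ a k) hn1 ha1
  have hpn : p ≤ n - 1 := Nat.findGreatest_le (n - 1)
  have hap : 1 ≤ a p := Nat.findGreatest_spec (P := fun k => 1 ≤ a k) hn1 ha1
  have hap1 : a (p + 1) ≤ 0 := by
    rcases Nat.lt_or_ge p (n - 1) with h | h
    · have hng : ¬ (1 ≤ a (p + 1)) := Nat.findGreatest_is_greatest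
        (P := fun k => 1 ≤ a k) (by omega) (by omega : p + 1 ≤ n - 1)
      omega
    · have : p + 1 = n := by omega
      rw [this]; exact han
  have hpn' : p ≤ n := by omega
  have hp1' : (1 : ℤ) ≤ (p : ℤ) := by exact_mod_cast hp1
  have hpn'' : (p : ℤ) ≤ (n : ℤ) - 1 := by
    have : (p : ℤ) ≤ ((n - 1 : ℕ) : ℤ) := by exact_mod_cast hpn
    omega
  -- pointwise bounds
  have hpos : ∀ i ∈ Finset.Icc 1 p, ((p : ℤ) + 1 - (i : ℤ)) ≤ a i := by
    intro i hi
    rw [Finset.mem_Icc] at hi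
    have := hq i p hi.1 hi.2 hpn'
    linarith
  have hneg : ∀ i ∈ Finset.Icc (p + 1) n, a i ≤ (p : ℤ) + 1 - (i : ℤ) := by
    intro i hi
    rw [Finset.mem_Icc] at hi
    have := hq (p + 1) i (by omega) hi.1 hi.2
    push_cast at this
    linarith
  -- splitting
  have hsplit : ∀ f : ℕ → ℤ, ∑ i ∈ Finset.Icc 1 n, f i =
      (∑ i ∈ Finset.Icc 1 p, f i) + ∑ i ∈ Finset.Icc (p + 1) n, f i := by
    intro f
    have h1 := Finset.sum_Ioc_consecutive f (Nat.zero_le p) hpn'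
    rw [← Finset.Icc_add_one_left_eq_Ioc p n, ← Finset.Icc_add_one_left_eq_Ioc 0 p, ← Finset.Icc_add_one_left_eq_Ioc 0 n] at h1
    exact h1.symm
  have hCp2 : (p : ℤ) * ((p : ℤ) + 1) ≤ 2 * ∑ i ∈ Finset.Icc 1 p, a i := by
    have h1 := Finset.sum_le_sum hpos
    have h3 : ∑ i ∈ Finset.Icc 1 p, ((p : ℤ) + 1 - (i : ℤ)) =
        (∑ _i ∈ Finset.Icc 1 p, ((p : ℤ) + 1)) - ∑ i ∈ Finset.Icc 1 p, (i : ℤ) :=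
      Finset.sum_sub_distrib _ _
    rw [sumConst p ((p : ℤ) + 1)] at h3
    have h5 := sumId p
    linarith
  have hCm2 : ((n : ℤ) - p - 1) * ((n : ℤ) - p) ≤ 2 * ∑ i ∈ Finset.Icc (p + 1) n, (-a i) := by
    have h1 : ∀ i ∈ Finset.Icc (p + 1) n, ((i : ℤ) - p - 1) ≤ -a i := by
      intro i hi; have := hneg i hi; linarith
    have h2 := Finset.sum_le_sum h1
    have h3 := sumA2 p n hpn'
    linarith
  have hNw : ∑ i ∈ Finset.Icc (p + 1) n, (i : ℤ) * ((i : ℤ) - p - 1) ≤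
      ∑ i ∈ Finset.Icc (p + 1) n, (i : ℤ) * (-a i) := by
    apply Finset.sum_le_sum
    intro i hi
    have h1 : ((i : ℤ) - p - 1) ≤ -a i := by have := hneg i hi; linarith
    have h2 : (0 : ℤ) ≤ (i : ℤ) := by positivity
    exact mul_le_mul_of_nonneg_left h1 h2
  have hPNeq : ∑ i ∈ Finset.Icc 1 p, (i : ℤ) * a i =
      (∑ i ∈ Finset.Icc 1 n, (i : ℤ) * a i) + ∑ i ∈ Finset.Icc (p + 1) n, (i : ℤ) * (-a i) := by
    rw [hsplit (fun i => (i : ℤ) * a i)]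
    have e1 : ∑ i ∈ Finset.Icc (p + 1) n, (i : ℤ) * (-a i) =
        ∑ i ∈ Finset.Icc (p + 1) n, -((i : ℤ) * a i) :=
      Finset.sum_congr rfl (fun i _ => by ring)
    have : ∑ i ∈ Finset.Icc (p + 1) n, (i : ℤ) * (-a i) =
        -∑ i ∈ Finset.Icc (p + 1) n, (i : ℤ) * a i := by
      rw [e1, Finset.sum_neg_distrib]
    rw [this]; ring
  have hPlow : (∑ i ∈ Finset.Icc (p + 1) n, (i : ℤ) * ((i : ℤ) - p - 1)) - 1 ≤
      ∑ i ∈ Finset.Icc 1 p, (i : ℤ) * a i := by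
    linarith [hS1, hNw, hPNeq]
  -- Chebyshev-type bound via Abel
  have hmonoE : ∀ i j, 1 ≤ i → i ≤ j → j ≤ p → (a j + (j : ℤ)) ≤ (a i + (i : ℤ)) := by
    intro i j hi hij hjp
    have := hq i j hi hij (le_trans hjp hpn')
    linarith
  have habel : 0 ≤ ∑ i ∈ Finset.Icc 1 p, ((p : ℤ) + 1 - 2 * i) * (a i + (i : ℤ)) :=
    abelIneq p (fun i => a i + (i : ℤ)) hmonoE
  have hsplitAbel : ∑ i ∈ Finset.Icc 1 p, ((p : ℤ) + 1 - 2 * i) * (a i + (i : ℤ)) =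
      (∑ i ∈ Finset.Icc 1 p, (((p : ℤ) + 1) * a i - 2 * ((i : ℤ) * a i))) +
        ∑ i ∈ Finset.Icc 1 p, ((p : ℤ) + 1 - 2 * i) * (i : ℤ) := by
    rw [← Finset.sum_add_distrib]
    exact Finset.sum_congr rfl (fun i _ => by ring)
  have hsplit2 : ∑ i ∈ Finset.Icc 1 p, (((p : ℤ) + 1) * a i - 2 * ((i : ℤ) * a i)) =
      ((p : ℤ) + 1) * (∑ i ∈ Finset.Icc 1 p, a i) -
        2 * ∑ i ∈ Finset.Icc 1 p, (i : ℤ) * a i := by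
    rw [Finset.sum_sub_distrib, ← Finset.mul_sum, ← Finset.mul_sum]
  have hE := sumE p
  have hcheb : ((p : ℤ) - 1) * p * ((p : ℤ) + 1) ≤
      6 * (((p : ℤ) + 1) * (∑ i ∈ Finset.Icc 1 p, a i) -
        2 * ∑ i ∈ Finset.Icc 1 p, (i : ℤ) * a i) := by
    linarith [habel, hsplitAbel, hsplit2, hE]
  have hT : (∑ i ∈ Finset.Icc 1 p, a i) + (∑ i ∈ Finset.Icc (p + 1) n, (-a i)) ≤
      ∑ i ∈ Finset.Icc 1 n, |a i| := by
    rw [hsplit (fun i => |a i|)]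
    have h1 : ∑ i ∈ Finset.Icc 1 p, a i ≤ ∑ i ∈ Finset.Icc 1 p, |a i| :=
      Finset.sum_le_sum (fun i _ => le_abs_self _)
    have h2 : ∑ i ∈ Finset.Icc (p + 1) n, (-a i) ≤ ∑ i ∈ Finset.Icc (p + 1) n, |a i| :=
      Finset.sum_le_sum (fun i _ => neg_le_abs _)
    linarith
  -- facts about z
  have hz1 : 2 * n + 2 ≤ 3 * z := by omega
  have hz2 : 3 * z ≤ 2 * n + 4 := by omega
  have hz3 : n + 3 ≤ 2 * z := by omega
  have hz1' : 2 * (n : ℤ) + 2 ≤ 3 * (z : ℤ) := by exact_mod_cast hz1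
  have hz2' : 3 * (z : ℤ) ≤ 2 * (n : ℤ) + 4 := by exact_mod_cast hz2
  have hz3' : (n : ℤ) + 3 ≤ 2 * (z : ℤ) := by exact_mod_cast hz3
  -- main bound
  have hmain : ((z : ℤ) - 2) * ((z : ℤ) - 1) + ((n : ℤ) - z + 2) * ((n : ℤ) - z + 1) ≤
      2 * ∑ i ∈ Finset.Icc 1 n, |a i| := by
    rcases le_or_gt z (p + 2) with hcase | hcase
    · -- Case A : p ≥ z - 2
      have hpz : (z : ℤ) ≤ (p : ℤ) + 2 := by exact_mod_cast hcase
      have hA : (0 : ℤ) ≤ (p : ℤ) - z + 2 := by linarith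
      have hB : (0 : ℤ) ≤ (p : ℤ) + z - 1 - n := by linarith
      have hAB := mul_nonneg hA hB
      linarith [hCp2, hCm2, hT, hAB]
    · -- Case B : p ≤ z - 3
      have hpz : (p : ℤ) + 3 ≤ (z : ℤ) := by exact_mod_cast hcase
      obtain ⟨u, hudef⟩ : ∃ u : ℤ, u = (p : ℤ) - 1 := ⟨_, rfl⟩
      obtain ⟨v, hvdef⟩ : ∃ v : ℤ, v = (z : ℤ) - 3 - p := ⟨_, rfl⟩
      obtain ⟨s, hsdef⟩ : ∃ s : ℤ, s = 2 * (n : ℤ) + 4 - 3 * z := ⟨_, rfl⟩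
      have hu : (0 : ℤ) ≤ u := by rw [hudef]; linarith
      have hv : (0 : ℤ) ≤ v := by rw [hvdef]; linarith
      have hs : (0 : ℤ) ≤ s := by rw [hsdef]; linarith
      have hH : (0 : ℤ) ≤ 216 + 146 * s + 21 * s ^ 2 + s ^ 3 + 414 * v + 138 * (v * s) +
          9 * (v * s ^ 2) + 201 * v ^ 2 + 27 * (v ^ 2 * s) + 27 * v ^ 3 + 150 * u +
          78 * (u * s) + 6 * (u * s ^ 2) + 210 * (u * v) + 42 * (u * v * s) +
          60 * (u * v ^ 2) + 21 * u ^ 2 + 9 * (u ^ 2 * s) + 21 * (u ^ 2 * v) := by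
        have q1 : (0 : ℤ) ≤ s ^ 2 := sq_nonneg s
        have q2 : (0 : ℤ) ≤ s ^ 3 := pow_nonneg hs 3
        have q3 : (0 : ℤ) ≤ v * s := mul_nonneg hv hs
        have q4 : (0 : ℤ) ≤ v * s ^ 2 := mul_nonneg hv q1
        have q5 : (0 : ℤ) ≤ v ^ 2 := sq_nonneg v
        have q6 : (0 : ℤ) ≤ v ^ 2 * s := mul_nonneg q5 hs
        have q7 : (0 : ℤ) ≤ v ^ 3 := pow_nonneg hv 3
        have q8 : (0 : ℤ) ≤ u * s := mul_nonneg hu hs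
        have q9 : (0 : ℤ) ≤ u * s ^ 2 := mul_nonneg hu q1
        have q10 : (0 : ℤ) ≤ u * v := mul_nonneg hu hv
        have q11 : (0 : ℤ) ≤ u * v * s := mul_nonneg q10 hs
        have q12 : (0 : ℤ) ≤ u * v ^ 2 := mul_nonneg hu q5
        have q13 : (0 : ℤ) ≤ u ^ 2 := sq_nonneg u
        have q14 : (0 : ℤ) ≤ u ^ 2 * s := mul_nonneg q13 hs
        have q15 : (0 : ℤ) ≤ u ^ 2 * v := mul_nonneg q13 hv
        linarith
      have hKEY : 3 * ((p : ℤ) + 1) *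
          ((((z : ℤ) - 2) * ((z : ℤ) - 1) + ((n : ℤ) - z + 2) * ((n : ℤ) - z + 1)) -
            ((n : ℤ) - p - 1) * ((n : ℤ) - p)) ≤
          2 * (3 * ((p : ℤ) + 1) * ((n : ℤ) - p - 1) * ((n : ℤ) - p) +
            ((n : ℤ) - p - 1) * ((n : ℤ) - p) * (2 * ((n : ℤ) - p - 1) + 1)) - 12 +
            ((p : ℤ) - 1) * p * ((p : ℤ) + 1) := by
        rw [hudef, hvdef, hsdef] at hH
        linarith [hH]
      have h3 := sumA3 p n hpn'
      have hCplow : 3 * ((p : ℤ) + 1) *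
          ((((z : ℤ) - 2) * ((z : ℤ) - 1) + ((n : ℤ) - z + 2) * ((n : ℤ) - z + 1)) -
            ((n : ℤ) - p - 1) * ((n : ℤ) - p)) ≤
          3 * ((p : ℤ) + 1) * (2 * ∑ i ∈ Finset.Icc 1 p, a i) := by
        linarith [hcheb, hPlow, h3, hKEY]
      have hp3 : (0 : ℤ) < 3 * ((p : ℤ) + 1) := by linarith
      have hfin : ((((z : ℤ) - 2) * ((z : ℤ) - 1) + ((n : ℤ) - z + 2) * ((n : ℤ) - z + 1)) -
          ((n : ℤ) - p - 1) * ((n : ℤ) - p)) ≤ 2 * ∑ i ∈ Finset.Icc 1 p, a i :=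
        le_of_mul_le_mul_left hCplow hp3
      linarith [hT, hCm2]
  refine ⟨hmain, ?_, ?_, ?_⟩
  · intro h0
    have h30 : (3 : ℤ) * (z : ℤ) = 2 * (n : ℤ) + 3 := by
      have : 3 * z = 2 * n + 3 := by omega
      exact_mod_cast this
    have h9 : 9 * (((z : ℤ) - 2) * ((z : ℤ) - 1) + ((n : ℤ) - z + 2) * ((n : ℤ) - z + 1)) =
        5 * (n : ℤ) ^ 2 - 3 * (n : ℤ) := by
      linear_combination (6 * (z : ℤ) - 2 * (n : ℤ) - 12) * h30
    linarith [hmain]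
  · intro h1
    have h31 : (3 : ℤ) * (z : ℤ) = 2 * (n : ℤ) + 4 := by
      have : 3 * z = 2 * n + 4 := by omega
      exact_mod_cast this
    have h9 : 9 * (((z : ℤ) - 2) * ((z : ℤ) - 1) + ((n : ℤ) - z + 2) * ((n : ℤ) - z + 1)) =
        5 * (n : ℤ) ^ 2 - (n : ℤ) - 4 := by
      linear_combination (6 * (z : ℤ) - 2 * (n : ℤ) - 10) * h31
    linarith [hmain]
  · intro h2
    have h32 : (3 : ℤ) * (z : ℤ) = 2 * (n : ℤ) + 2 := by
      have : 3 * z = 2 * n + 2 := by omega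
      exact_mod_cast this
    have h9 : 9 * (((z : ℤ) - 2) * ((z : ℤ) - 1) + ((n : ℤ) - z + 2) * ((n : ℤ) - z + 1)) =
        5 * (n : ℤ) ^ 2 - 5 * (n : ℤ) + 8 := by
      linear_combination (6 * (z : ℤ) - 2 * (n : ℤ) - 14) * h32
    linarith [hmain]
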